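/- For any integers n, t, p ≥ 1 and any sequence 𝐛 ∈ (ℤ/pℤ)^n, one has p^{|supp(𝐛)|} · |{(𝐢,𝐱) : 𝐢 ∈ supp(𝐛)^t, 𝐱 ∈ (ℤ/pℤ)^t, ms(𝐢,𝐱) = 𝐛}| = p^t · |{𝐢 ∈ supp(𝐛)^t : range(𝐢) = supp(𝐛)}|. -/

import Mathlib

/-- The modular signature of a pair of sequences `i ∈ [n]^t`, `x ∈ (ℤ/pℤ)^t`:
its `q`-th coordinate is `∑_{r : i r = q} x r (mod p)`. -/
def ms {n t p : ℕ} (i : Fin t → Fin n) (x : Fin t → ZMod p) : Fin n → ZMod p :=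
  fun q => ∑ r ∈ Finset.univ.filter (fun r => i r = q), x r

/-- The support of `b ∈ (ℤ/pℤ)^n`: the set of coordinates with nonzero entry. -/
def msupp {n p : ℕ} (b : Fin n → ZMod p) : Finset (Fin n) :=
  Finset.univ.filter (fun q => b q ≠ 0)

open Finset

lemma msupp_zero {n p : ℕ} (b : Fin n → ZMod p) {q : Fin n} (hq : q ∉ msupp b) : b q = 0 := by
  simpa [msupp] using hq

lemma key_count {n t p : ℕ} [NeZero p] (ht : 1 ≤ t) (b : Fin n → ZMod p) (i : Fin t → Fin n)
    (hmem : ∀ r, i r ∈ msupp b) (himg : Finset.image i Finset.univ = msupp b) :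
    p ^ (msupp b).card * (Finset.univ.filter fun x : Fin t → ZMod p => ms i x = b).card = p ^ t := by
  classical
  have hex : ∀ q ∈ msupp b, ∃ r, i r = q := by
    intro q hq
    rw [← himg] at hq
    simpa using hq
  set sec : Fin n → Fin t := fun q => if h : ∃ r, i r = q then h.choose else ⟨0, ht⟩ with hsecdef
  have hsec : ∀ q ∈ msupp b, i (sec q) = q := by
    intro q hq
    have h := hex q hq
    simp only [hsecdef, dif_pos h]
    exact h.choose_spec
  set R : Finset (Fin t) := (msupp b).image sec with hRdef
  have hsecR : ∀ q ∈ msupp b, sec q ∈ R := fun q hq => Finset.mem_image_of_mem _ hq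
  have hRfix : ∀ r ∈ R, sec (i r) = r := by
    intro r hr
    obtain ⟨q, hq, hqr⟩ := Finset.mem_image.mp hr
    have : i r = q := by rw [← hqr, hsec q hq]
    rw [this, hqr]
  have hfiber : ∀ q ∈ msupp b, (univ.filter fun r => i r = q)
      = insert (sec q) (univ.filter fun r => i r = q ∧ r ∉ R) := by
    intro q hq
    ext r
    simp only [mem_filter, mem_univ, true_and, mem_insert]
    constructor
    · intro h
      by_cases hrR : r ∈ R
      · left; exact (h ▸ hRfix r hrR).symm
      · right; exact ⟨h, hrR⟩
    · rintro (rfl | ⟨h, _⟩)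
      · exact hsec q hq
      · exact h
  have hsecnot : ∀ q ∈ msupp b, sec q ∉ (univ.filter fun r => i r = q ∧ r ∉ R) := by
    intro q hq
    simp only [mem_filter]
    rintro ⟨-, -, h⟩
    exact h (hsecR q hq)
  have hfiber0 : ∀ q, q ∉ msupp b → (univ.filter fun r => i r = q) = (∅ : Finset (Fin t)) := by
    intro q hq
    rw [Finset.filter_eq_empty_iff]
    intro r _ h
    exact hq (h ▸ hmem r)
  have hcard : ((univ : Finset (({q // q ∈ msupp b}) → ZMod p)) ×ˢ
        (univ.filter fun x : Fin t → ZMod p => ms i x = b)).card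
      = (univ : Finset (Fin t → ZMod p)).card := by
    refine Finset.card_nbij'
      (fun (cx : ({q // q ∈ msupp b} → ZMod p) × (Fin t → ZMod p)) (r : Fin t) =>
        if r ∈ R then cx.1 ⟨i r, hmem r⟩ else cx.2 r)
      (fun (y : Fin t → ZMod p) =>
        ((fun q : {q // q ∈ msupp b} => y (sec q)),
         (fun r : Fin t => if r ∈ R then
            b (i r) - ∑ r' ∈ univ.filter (fun r' => i r' = i r ∧ r' ∉ R), y r'
          else y r))) ?_ ?_ ?_ ?_
    · intro a _; exact mem_univ _
    · intro y _
      simp only [Finset.mem_coe, mem_product, mem_univ, true_and, mem_filter]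
      funext q
      by_cases hq : q ∈ msupp b
      · rw [ms]
        rw [hfiber q hq, Finset.sum_insert (hsecnot q hq), if_pos (hsecR q hq), hsec q hq]
        have h2 : ∀ r ∈ univ.filter (fun r => i r = q ∧ r ∉ R),
            (if r ∈ R then
              b (i r) - ∑ r' ∈ univ.filter (fun r' => i r' = i r ∧ r' ∉ R), y r'
            else y r) = y r := by
          intro r hr
          simp only [mem_filter] at hr
          rw [if_neg hr.2.2]
        rw [Finset.sum_congr rfl h2]
        ring
      · rw [ms]
        rw [hfiber0 q hq, Finset.sum_empty, msupp_zero b hq]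
    · rintro ⟨c, x⟩ hcx
      simp only [Finset.mem_coe, mem_product, mem_univ, true_and, mem_filter] at hcx
      refine Prod.ext ?_ ?_
      · funext q
        simp only []
        rw [if_pos (hsecR q q.2)]
        congr 1
        exact Subtype.ext (hsec q q.2)
      · funext r
        simp only []
        by_cases hr : r ∈ R
        · rw [if_pos hr]
          have hir : i r ∈ msupp b := hmem r
          have hb : b (i r) = ∑ r' ∈ univ.filter (fun r' => i r' = i r), x r' := by
            rw [← hcx]; rfl
          rw [hfiber _ hir, Finset.sum_insert (hsecnot _ hir), hRfix r hr] at hb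
          have h2 : ∀ r' ∈ univ.filter (fun r' => i r' = i r ∧ r' ∉ R),
              (if r' ∈ R then c ⟨i r', hmem r'⟩ else x r') = x r' := by
            intro r' hr'
            simp only [mem_filter] at hr'
            rw [if_neg hr'.2.2]
          rw [Finset.sum_congr rfl h2, hb]
          ring
        · rw [if_neg hr, if_neg hr]
    · intro y _
      funext r
      simp only []
      by_cases hr : r ∈ R
      · rw [if_pos hr, hRfix r hr]
      · rw [if_neg hr, if_neg hr]
  rw [Finset.card_product, Finset.card_univ, Finset.card_univ, Fintype.card_fun,
    Fintype.card_fun, ZMod.card, Fintype.card_coe, Fintype.card_fin] at hcard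
  exact hcard

/-- `p^{|supp b|} · |{(𝐢,𝐱) : 𝐢 ∈ supp(𝐛)^t, ms(𝐢,𝐱) = 𝐛}|
  = p^t · |{𝐢 ∈ supp(𝐛)^t : range(𝐢) = supp(𝐛)}|`. -/
theorem count_ms_support (n t p : ℕ) [NeZero p] (hn : 1 ≤ n) (ht : 1 ≤ t) (hp : 1 ≤ p)
    (b : Fin n → ZMod p) :
    p ^ (msupp b).card *
      (Finset.univ.filter (fun ix : (Fin t → Fin n) × (Fin t → ZMod p) =>
        (∀ r, ix.1 r ∈ msupp b) ∧ ms ix.1 ix.2 = b)).card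
    = p ^ t *
      (Finset.univ.filter (fun i : Fin t → Fin n =>
        (∀ r, i r ∈ msupp b) ∧ Finset.image i Finset.univ = msupp b)).card := by
  classical
  have h1 : (Finset.univ.filter (fun ix : (Fin t → Fin n) × (Fin t → ZMod p) =>
        (∀ r, ix.1 r ∈ msupp b) ∧ ms ix.1 ix.2 = b)).card
      = ∑ i : Fin t → Fin n, (Finset.univ.filter (fun x : Fin t → ZMod p =>
          (∀ r, i r ∈ msupp b) ∧ ms i x = b)).card := by
    rw [Finset.card_filter, ← Finset.univ_product_univ, Finset.sum_product]
    exact Finset.sum_congr rfl fun i _ => (Finset.card_filter _ _).symm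
  have h2 : ∀ i : Fin t → Fin n,
      p ^ (msupp b).card * (Finset.univ.filter (fun x : Fin t → ZMod p =>
          (∀ r, i r ∈ msupp b) ∧ ms i x = b)).card
      = if (∀ r, i r ∈ msupp b) ∧ Finset.image i Finset.univ = msupp b then p ^ t else 0 := by
    intro i
    by_cases hmem : ∀ r, i r ∈ msupp b
    · rw [Finset.filter_congr (fun x _ => and_iff_right hmem)]
      by_cases himg : Finset.image i Finset.univ = msupp b
      · rw [if_pos ⟨hmem, himg⟩]
        exact key_count ht b i hmem himg
      · rw [if_neg fun h => himg h.2]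
        have : (Finset.univ.filter (fun x : Fin t → ZMod p => ms i x = b)) = ∅ := by
          rw [Finset.filter_eq_empty_iff]
          intro x _ hx
          -- image ⊆ msupp b and ≠, so there is q ∈ msupp b \ image
          have hsub : Finset.image i Finset.univ ⊆ msupp b := by
            intro q hq
            obtain ⟨r, _, rfl⟩ := Finset.mem_image.mp hq
            exact hmem r
          obtain ⟨q, hqS, hqI⟩ := Finset.exists_of_ssubset (hsub.ssubset_of_ne himg)
          have hb : b q ≠ 0 := by simpa [msupp] using hqS
          have hfib : (Finset.univ.filter fun r => i r = q) = (∅ : Finset (Fin t)) := by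
            rw [Finset.filter_eq_empty_iff]
            intro r _ h
            exact hqI (Finset.mem_image.mpr ⟨r, Finset.mem_univ r, h⟩)
          have : ms i x q = 0 := by rw [ms]; rw [hfib, Finset.sum_empty]
          rw [hx] at this
          exact hb this
        rw [this, Finset.card_empty, mul_zero]
    · have : (Finset.univ.filter (fun x : Fin t → ZMod p =>
          (∀ r, i r ∈ msupp b) ∧ ms i x = b)) = ∅ := by
        rw [Finset.filter_eq_empty_iff]
        intro x _ hx
        exact hmem hx.1
      rw [this, Finset.card_empty, mul_zero, if_neg (by tauto)]
  rw [h1, Finset.mul_sum]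
  rw [Finset.sum_congr rfl (fun i _ => h2 i)]
  rw [← Finset.sum_filter, Finset.sum_const, smul_eq_mul, mul_comm]
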